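/- (Characterization of the Lagrange multiplier; Eq. (8) of the analysis.) Let G be a symmetric positive definite N×N real matrix all of whose eigenvalues lie in [d_min, d_max] with 0 < d_min ≤ d_max, let λ > 0, let y ∈ ℝ^N, and set f* := G(λ I + G)^{-1} y. Let ε > 0 and suppose ‖y − f*‖² = Nε and ‖y‖ > √(Nε). Then there exists α ∈ [d_min, d_max] such that λ = α·√(Nε)/(‖y‖ − √(Nε)). -/

import Mathlib

open Matrix in
lemma spec_bounds {N : ℕ} (A : Matrix (Fin N) (Fin N) ℝ) (hA : A.IsHermitian)
    (a b : ℝ) (ha : 0 ≤ a) (hab : a ≤ b) (heig : ∀ i, hA.eigenvalues i ∈ Set.Icc a b)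
    (v : EuclideanSpace ℝ (Fin N)) :
    a * ‖v‖ ^ 2 ≤ inner (𝕜 := ℝ) (Matrix.toEuclideanLin A v) v ∧
      ‖Matrix.toEuclideanLin A v‖ ≤ b * ‖v‖ := by
  set B := hA.eigenvectorBasis with hB
  set d := hA.eigenvalues with hd
  set c : Fin N → ℝ := fun i => inner (𝕜 := ℝ) (B i) v with hc
  have hsymm : (Matrix.toEuclideanLin A).IsSymmetric :=
    Matrix.isHermitian_iff_isSymmetric.mp hA
  have hAv : ∀ i, inner (𝕜 := ℝ) (Matrix.toEuclideanLin A v) (B i) = d i * c i := by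
    intro i
    rw [hsymm v (B i)]
    have h2 : Matrix.toEuclideanLin A (B i) = d i • (B i) := by
      apply (WithLp.equiv 2 (Fin N → ℝ)).injective
      exact hA.mulVec_eigenvectorBasis i
    rw [h2, inner_smul_right, hc, real_inner_comm]
  have hv2 : ‖v‖ ^ 2 = ∑ i, c i ^ 2 := by
    have := B.sum_inner_mul_inner v v
    rw [real_inner_self_eq_norm_sq] at this
    rw [← this]
    congr 1; ext i
    rw [hc]; simp only []; rw [real_inner_comm]; ring
  have hb : 0 ≤ b := le_trans ha hab
  constructor
  · have := B.sum_inner_mul_inner (Matrix.toEuclideanLin A v) v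
    rw [← this, hv2, Finset.mul_sum]
    apply Finset.sum_le_sum
    intro i _
    rw [hAv i]
    calc a * c i ^ 2 ≤ d i * c i ^ 2 :=
          mul_le_mul_of_nonneg_right (heig i).1 (sq_nonneg _)
      _ = d i * c i * inner (𝕜 := ℝ) (B i) v := by rw [hc]; ring
  · have hsq : ‖Matrix.toEuclideanLin A v‖ ^ 2 ≤ (b * ‖v‖) ^ 2 := by
      have := B.sum_inner_mul_inner (Matrix.toEuclideanLin A v) (Matrix.toEuclideanLin A v)
      rw [real_inner_self_eq_norm_sq] at this
      rw [← this, mul_pow, hv2, Finset.mul_sum]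
      apply Finset.sum_le_sum
      intro i _
      have h1 : inner (𝕜 := ℝ) (B i) (Matrix.toEuclideanLin A v) = d i * c i := by
        rw [real_inner_comm]; exact hAv i
      rw [hAv i, h1]
      have hd2 : d i ^ 2 ≤ b ^ 2 := by
        apply sq_le_sq'
        · linarith [(heig i).1]
        · exact (heig i).2
      calc d i * c i * (d i * c i) = d i ^ 2 * c i ^ 2 := by ring
        _ ≤ b ^ 2 * c i ^ 2 := mul_le_mul_of_nonneg_right hd2 (sq_nonneg _)
    have h1 : 0 ≤ b * ‖v‖ := mul_nonneg hb (norm_nonneg _)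
    nlinarith [norm_nonneg (Matrix.toEuclideanLin A v)]

/-- (Characterization of the Lagrange multiplier.) Let `G` be symmetric
positive definite with eigenvalues in `[d_min, d_max]`, `λ > 0`, `f* := G(λI+G)⁻¹ y`.
If `‖y − f*‖² = Nε` and `‖y‖ > √(Nε)` then `λ = α·√(Nε)/(‖y‖ − √(Nε))` for some
`α ∈ [d_min, d_max]`. -/
theorem ridge_lagrange_multiplier_characterization
    (N : ℕ) (hN : 1 ≤ N)
    (G : Matrix (Fin N) (Fin N) ℝ) (hG : G.PosDef)
    (dmin dmax : ℝ) (hdmin : 0 < dmin) (hdd : dmin ≤ dmax)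
    (heig : ∀ i, hG.1.eigenvalues i ∈ Set.Icc dmin dmax)
    (l : ℝ) (hl : 0 < l)
    (y : EuclideanSpace ℝ (Fin N))
    (fstar : EuclideanSpace ℝ (Fin N))
    (hfstar : fstar = (G * (l • (1 : Matrix (Fin N) (Fin N) ℝ) + G)⁻¹).mulVec y)
    (ε : ℝ) (hε : 0 < ε)
    (hres : ‖y - fstar‖ ^ 2 = (N : ℝ) * ε)
    (hy : Real.sqrt ((N : ℝ) * ε) < ‖y‖) :
    ∃ α ∈ Set.Icc dmin dmax,
      l = α * Real.sqrt ((N : ℝ) * ε) / (‖y‖ - Real.sqrt ((N : ℝ) * ε)) := by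

  set r := Real.sqrt ((N : ℝ) * ε) with hrdef
  have hNε : 0 < (N : ℝ) * ε := by positivity
  have hrpos : 0 < r := Real.sqrt_pos.mpr hNε
  have hr : ‖y - fstar‖ = r := by
    rw [hrdef, ← hres, Real.sqrt_sq (norm_nonneg _)]
  set B : Matrix (Fin N) (Fin N) ℝ := l • (1 : Matrix (Fin N) (Fin N) ℝ) + G with hBdef
  have hBpos : B.PosDef := by
    rw [hBdef]
    refine Matrix.PosDef.add_posSemidef ?_ hG.posSemidef
    rw [Matrix.smul_one_eq_diagonal]
    exact Matrix.posDef_diagonal_iff.mpr fun _ => hl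
  set u : EuclideanSpace ℝ (Fin N) := WithLp.toLp 2 (B⁻¹.mulVec y) with hudef
  have hGu : Matrix.toEuclideanLin G u = (WithLp.toLp 2 (G.mulVec u) : EuclideanSpace ℝ (Fin N)) := rfl
  have hyu : y = (WithLp.toLp 2 (B.mulVec u) : EuclideanSpace ℝ (Fin N)) := by
    rw [hudef]
    show y = WithLp.toLp 2 (B.mulVec (B⁻¹.mulVec y))
    rw [Matrix.mulVec_mulVec, Matrix.mul_nonsing_inv _ hBpos.det_pos.ne'.isUnit,
      Matrix.one_mulVec]
  have hfs : fstar = (WithLp.toLp 2 (G.mulVec u) : EuclideanSpace ℝ (Fin N)) := by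
    apply (WithLp.equiv 2 (Fin N → ℝ)).injective
    show fstar.ofLp = G.mulVec u.ofLp
    rw [hfstar, hudef]
    show ((G * B⁻¹).mulVec y : Fin N → ℝ)
        = (G.mulVec (B⁻¹.mulVec y) : Fin N → ℝ)
    rw [Matrix.mulVec_mulVec]
  set Gu : EuclideanSpace ℝ (Fin N) := WithLp.toLp 2 (G.mulVec u) with hGudef
  have hsplit : (WithLp.toLp 2 (B.mulVec u) : EuclideanSpace ℝ (Fin N)) = l • u + Gu := by
    apply (WithLp.equiv 2 (Fin N → ℝ)).injective
    show (B.mulVec u : Fin N → ℝ)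
        = l • (WithLp.equiv 2 (Fin N → ℝ) u) + G.mulVec u
    rw [hBdef, Matrix.add_mulVec, Matrix.smul_mulVec, Matrix.one_mulVec]
    rfl
  clear_value Gu
  have hdiff : y - fstar = l • u := by
    rw [hyu, hfs, hsplit]; abel
  have hru : r = l * ‖u‖ := by
    rw [← hr, hdiff, norm_smul, Real.norm_eq_abs, abs_of_pos hl]
  clear_value u r
  have hy_eq : y = l • u + Gu := hyu.trans hsplit
  obtain ⟨hlow, hup⟩ := spec_bounds G hG.1 dmin dmax hdmin.le hdd heig u
  rw [hGu] at hlow hup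
  clear hGu hyu hfs hsplit hdiff hfstar hres hr hrdef hGudef hBdef hBpos heig hudef
  clear_value B
  clear hG B G fstar
  have hupos : 0 < ‖u‖ := by
    rcases (norm_nonneg u).eq_or_lt with h | h
    · rw [← h, mul_zero] at hru; linarith
    · exact h
  have hyup : ‖y‖ ≤ (l + dmax) * ‖u‖ := by
    rw [hy_eq]
    calc ‖l • u + Gu‖ ≤ ‖l • u‖ + ‖Gu‖ := norm_add_le _ _
      _ ≤ l * ‖u‖ + dmax * ‖u‖ := by
          rw [norm_smul, Real.norm_eq_abs, abs_of_pos hl]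
          linarith
      _ = (l + dmax) * ‖u‖ := by ring
  have hylow : (l + dmin) * ‖u‖ ≤ ‖y‖ := by
    have hinner : (l + dmin) * ‖u‖ ^ 2 ≤ inner (𝕜 := ℝ) y u := by
      rw [hy_eq, inner_add_left, real_inner_smul_left, real_inner_self_eq_norm_sq]
      linarith
    have hcs : inner (𝕜 := ℝ) y u ≤ ‖y‖ * ‖u‖ := real_inner_le_norm y u
    have h2 : ((l + dmin) * ‖u‖) * ‖u‖ ≤ ‖y‖ * ‖u‖ := by
      calc ((l + dmin) * ‖u‖) * ‖u‖ = (l + dmin) * ‖u‖ ^ 2 := by ring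
        _ ≤ inner (𝕜 := ℝ) y u := hinner
        _ ≤ ‖y‖ * ‖u‖ := hcs
    exact le_of_mul_le_mul_right h2 hupos
  clear hlow hup hy_eq
  refine ⟨l * (‖y‖ - r) / r, ⟨?_, ?_⟩, ?_⟩
  · rw [le_div_iff₀ hrpos, hru]
    nlinarith [mul_le_mul_of_nonneg_left hylow hl.le]
  · rw [div_le_iff₀ hrpos, hru]
    nlinarith [mul_le_mul_of_nonneg_left hyup hl.le]
  · have h1 : ‖y‖ - r ≠ 0 := by linarith
    field_simp
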